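/- Let W be a standard one-dimensional Brownian motion with natural filtration ℱ^W = (ℱ^W_t)_{t≥0}, and let f : [0,∞) × ℝ → ℝ be a continuous, strictly positive function with f(0,0) = 1. Suppose there exist constants λ₁, λ₂ ∈ ℝ such that the three processes t ↦ f(t, W_t) e^{−λ₁ t}, t ↦ f(t, W_t)² e^{−λ₂ t}, and t ↦ f(4t, 2W_t + t) e^{−λ₂ t} are martingales with respect to ℱ^W. Then there exists a constant c ∈ ℝ such that f(u, v) = exp(c v − (c/2) u) for all u ≥ 0 and v ∈ ℝ. -/

import Mathlib

open MeasureTheory ProbabilityTheory Real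
open scoped NNReal ENNReal

noncomputable section

variable {Ω : Type*} [mΩ : MeasurableSpace Ω]

/-- The σ-algebra generated by the process `W` up to time `t`. -/
def natSigma (W : ℝ → Ω → ℝ) (t : ℝ) : MeasurableSpace Ω :=
  ⨆ s ∈ Set.Icc (0 : ℝ) t, MeasurableSpace.comap (W s) inferInstance

/-- `W` is a standard one-dimensional Brownian motion under `P`. -/
structure IsStandardBM (P : Measure Ω) (W : ℝ → Ω → ℝ) : Prop where
  isProb : IsProbabilityMeasure P
  init : ∀ ω, W 0 ω = 0
  cont : ∀ ω, Continuous fun t => W t ω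
  meas : ∀ t, Measurable (W t)
  gauss : ∀ s t : ℝ, 0 ≤ s → s ≤ t →
    P.map (fun ω => W t ω - W s ω) = gaussianReal 0 (Real.toNNReal (t - s))
  indep : ∀ s t : ℝ, 0 ≤ s → s ≤ t →
    Indep (MeasurableSpace.comap (fun ω => W t ω - W s ω) inferInstance) (natSigma W s) P

/-- The natural filtration of the process `W`, indexed by nonnegative times. -/
def natFiltration (W : ℝ → Ω → ℝ) (hW : ∀ t, Measurable (W t)) :
    Filtration ℝ≥0 mΩ where
  seq t := natSigma W (t : ℝ)
  mono' s t hst := biSup_mono fun u hu => ⟨hu.1, hu.2.trans (NNReal.coe_le_coe.mpr hst)⟩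
  le' t := iSup₂_le fun s _ => measurable_iff_comap_le.mp (hW s)

/-- The moment generating function of a centered Gaussian measure. -/
lemma integral_exp_gaussianReal (c : ℝ) (v : ℝ≥0) :
    ∫ x, Real.exp (c * x) ∂(gaussianReal 0 v) = Real.exp (c ^ 2 * v / 2) := by
  by_cases hv : v = 0
  · subst hv; simp
  · rw [gaussianReal_of_var_ne_zero _ hv]
    have hrw : (gaussianPDF 0 v)
        = fun x => ((Real.toNNReal (gaussianPDFReal 0 v x) : ℝ≥0) : ℝ≥0∞) := rfl
    rw [hrw, integral_withDensity_eq_integral_smul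
      ((measurable_gaussianPDFReal 0 v).real_toNNReal) _]
    have hvne : ((v : ℝ)) ≠ 0 := NNReal.coe_ne_zero.mpr hv
    have hpt : ∀ x, (Real.toNNReal (gaussianPDFReal 0 v x)) • Real.exp (c * x)
        = Real.exp (c ^ 2 * v / 2) * gaussianPDFReal (c * v) v x := by
      intro x
      rw [NNReal.smul_def, Real.coe_toNNReal _ (gaussianPDFReal_nonneg 0 v x)]
      unfold gaussianPDFReal
      have harg : -(x - 0) ^ 2 / (2 * v) + c * x
          = c ^ 2 * v / 2 + -(x - c * v) ^ 2 / (2 * v) := by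
        field_simp
        ring
      calc (√(2 * π * v))⁻¹ * rexp (-(x - 0) ^ 2 / (2 * v)) * rexp (c * x)
          = (√(2 * π * v))⁻¹ * rexp (-(x - 0) ^ 2 / (2 * v) + c * x) := by
            rw [mul_assoc, Real.exp_add]
        _ = (√(2 * π * v))⁻¹ * (rexp (c ^ 2 * v / 2) * rexp (-(x - c * v) ^ 2 / (2 * v))) := by
            rw [harg, Real.exp_add]
        _ = rexp (c ^ 2 * v / 2) * ((√(2 * π * v))⁻¹ * rexp (-(x - c * v) ^ 2 / (2 * v))) := by
            ring
    simp_rw [hpt]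
    rw [integral_const_mul, integral_gaussianPDFReal_eq_one _ hv, mul_one]

/-- Freezing lemma: if `D` is independent of `natSigma W s` and `ξ` is
`natSigma W s`-measurable, then integrals of `F (ξ, D)` factor through the product of the laws. -/
lemma freeze {E : Type*} [MeasurableSpace E] {P : Measure Ω} [IsProbabilityMeasure P]
    {W : ℝ → Ω → ℝ} {s : ℝ} (hm : natSigma W s ≤ mΩ)
    {D : Ω → ℝ} (hD : Measurable D)
    (hindep : Indep (MeasurableSpace.comap D inferInstance) (natSigma W s) P)
    {ξ : Ω → E} (hξ : Measurable[natSigma W s] ξ)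
    {F : E × ℝ → ℝ} (hF : StronglyMeasurable F)
    (hFint : Integrable (fun ω => F (ξ ω, D ω)) P) :
    (∫ ω, F (ξ ω, D ω) ∂P = ∫ e, ∫ d, F (e, d) ∂(P.map D) ∂(P.map ξ))
    ∧ Integrable (fun e => ∫ d, F (e, d) ∂(P.map D)) (P.map ξ) := by
  have hξ0 : Measurable ξ := hξ.mono hm le_rfl
  have hIF : IndepFun ξ D P := by
    have h1 : MeasurableSpace.comap ξ inferInstance ≤ natSigma W s :=
      measurable_iff_comap_le.mp hξ
    exact Indep.symm (indep_of_indep_of_le_right hindep h1)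
  have hpm : AEMeasurable (fun ω => (ξ ω, D ω)) P := (hξ0.prodMk hD).aemeasurable
  have hpair : P.map (fun ω => (ξ ω, D ω)) = (P.map ξ).prod (P.map D) :=
    (indepFun_iff_map_prod_eq_prod_map_map hξ0.aemeasurable hD.aemeasurable).mp hIF
  have hFint' : Integrable F ((P.map ξ).prod (P.map D)) := by
    rw [← hpair]
    exact (integrable_map_measure hF.aestronglyMeasurable hpm).mpr hFint
  refine ⟨?_, hFint'.integral_prod_left⟩
  calc ∫ ω, F (ξ ω, D ω) ∂P
      = ∫ p, F p ∂(P.map (fun ω => (ξ ω, D ω))) :=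
        (integral_map hpm hF.aestronglyMeasurable).symm
    _ = ∫ p, F p ∂((P.map ξ).prod (P.map D)) := by rw [hpair]
    _ = ∫ e, ∫ d, F (e, d) ∂(P.map D) ∂(P.map ξ) := integral_prod F hFint'

lemma IsStandardBM.map_W {P : Measure Ω} {W : ℝ → Ω → ℝ} (hBM : IsStandardBM P W)
    {t : ℝ} (ht : 0 ≤ t) : P.map (W t) = gaussianReal 0 t.toNNReal := by
  have h := hBM.gauss 0 t le_rfl ht
  simpa [hBM.init] using h

/-- The key conditional identity: for a martingale of the form `φ (t, W t)`, for a.e. `x`,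
the Gaussian average of `φ (t, x + ·)` equals `φ (s, x)`. -/
lemma keyP {P : Measure Ω} {W : ℝ → Ω → ℝ} (hBM : IsStandardBM P W) (φ : ℝ → ℝ → ℝ)
    (hφ : ∀ t : ℝ, 0 ≤ t → Measurable (φ t))
    (hmart : Martingale (fun (t : ℝ≥0) ω => φ t (W t ω)) (natFiltration W hBM.meas) P)
    {s t : ℝ} (hs : 0 < s) (hst : s ≤ t) :
    ∀ᵐ x ∂(volume : Measure ℝ),
      ∫ y, φ t (x + y) ∂(gaussianReal 0 (t - s).toNNReal) = φ s x := by
  haveI : IsProbabilityMeasure P := hBM.isProb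
  have ht : (0:ℝ) ≤ t := hs.le.trans hst
  set γ : Measure ℝ := gaussianReal 0 (t - s).toNNReal with hγ
  have hm : natSigma W s ≤ mΩ := (natFiltration W hBM.meas).le ⟨s, hs.le⟩
  set D : Ω → ℝ := fun ω => W t ω - W s ω with hDdef
  have hD : Measurable D := (hBM.meas t).sub (hBM.meas s)
  have hLawD : P.map D = γ := hBM.gauss s t hs.le hst
  have hindep := hBM.indep s t hs.le hst
  have hle : MeasurableSpace.comap (W s) inferInstance ≤ natSigma W s := by
    rw [natSigma]
    exact le_iSup₂ (f := fun (u : ℝ) (_ : u ∈ Set.Icc (0:ℝ) s) =>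
      MeasurableSpace.comap (W u) inferInstance) s ⟨hs.le, le_rfl⟩
  have hWsm : Measurable[natSigma W s] (W s) := measurable_iff_comap_le.mpr hle
  have hφt : Measurable (φ t) := hφ t ht
  have hφs : Measurable (φ s) := hφ s hs.le
  set Φ : ℝ → ℝ := fun x => ∫ y, φ t (x + y) ∂γ with hΦdef
  have hFsm : StronglyMeasurable (fun p : ℝ × ℝ => φ t (p.1 + p.2)) :=
    (hφt.comp measurable_add).stronglyMeasurable
  have hΦm : Measurable Φ := by
    have h := hFsm.integral_prod_right' (ν := γ)
    exact h.measurable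
  have hMt_int : Integrable (fun ω => φ t (W t ω)) P := hmart.integrable ⟨t, ht⟩
  have hWts : ∀ ω, φ t (W s ω + D ω) = φ t (W t ω) := fun ω => by
    simp [hDdef]
  have h1 := freeze hm hD hindep hWsm hFsm
    (hMt_int.congr (Filter.Eventually.of_forall fun ω => (hWts ω).symm))
  have hΦint_map : Integrable Φ (P.map (W s)) := by
    have := h1.2
    rwa [hLawD] at this
  have hgint : Integrable (fun ω => Φ (W s ω)) P :=
    (integrable_map_measure hΦm.aestronglyMeasurable (hBM.meas s).aemeasurable).mp hΦint_map
  have hseteq : ∀ A : Set Ω, MeasurableSet[natSigma W s] A →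
      ∫ ω in A, Φ (W s ω) ∂P = ∫ ω in A, φ t (W t ω) ∂P := by
    intro A hA
    have hAΩ : MeasurableSet A := hm A hA
    set ξ : Ω → ℝ × ℝ := fun ω => (A.indicator (fun _ => (1:ℝ)) ω, W s ω) with hξdef
    have hξm : Measurable[natSigma W s] ξ :=
      Measurable.prodMk (measurable_const.indicator hA) hWsm
    have hξ0 : Measurable ξ :=
      Measurable.prodMk (measurable_const.indicator hAΩ) (hBM.meas s)
    set F : (ℝ × ℝ) × ℝ → ℝ := fun p => p.1.1 * φ t (p.1.2 + p.2) with hFdef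
    have hFsm' : StronglyMeasurable F :=
      ((measurable_fst.comp measurable_fst).mul
        (hφt.comp ((measurable_snd.comp measurable_fst).add measurable_snd))).stronglyMeasurable
    have hcompeq : ∀ ω, F (ξ ω, D ω) = A.indicator (fun ω' => φ t (W t ω')) ω := by
      intro ω
      by_cases hω : ω ∈ A <;>
        simp [hFdef, hξdef, Set.indicator_of_mem, Set.indicator_of_notMem, hω, hWts ω]
    have hFint : Integrable (fun ω => F (ξ ω, D ω)) P :=
      (hMt_int.indicator hAΩ).congr (Filter.Eventually.of_forall fun ω => (hcompeq ω).symm)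
    have heq := (freeze hm hD hindep hξm hFsm' hFint).1
    rw [hLawD] at heq
    have hLHS : ∫ ω, F (ξ ω, D ω) ∂P = ∫ ω in A, φ t (W t ω) ∂P := by
      rw [integral_congr_ae (Filter.Eventually.of_forall hcompeq), integral_indicator hAΩ]
    have hinner : ∀ e : ℝ × ℝ, ∫ d, F (e, d) ∂γ = e.1 * Φ e.2 := fun e =>
      integral_const_mul e.1 _
    have hRHS : ∫ e, ∫ d, F (e, d) ∂γ ∂(P.map ξ) = ∫ ω in A, Φ (W s ω) ∂P := by
      calc ∫ e, ∫ d, F (e, d) ∂γ ∂(P.map ξ)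
          = ∫ e : ℝ × ℝ, e.1 * Φ e.2 ∂(P.map ξ) := by
            exact integral_congr_ae (Filter.Eventually.of_forall hinner)
        _ = ∫ ω, (ξ ω).1 * Φ ((ξ ω).2) ∂P :=
            integral_map hξ0.aemeasurable
              ((measurable_fst.mul (hΦm.comp measurable_snd)).aestronglyMeasurable)
        _ = ∫ ω, A.indicator (fun ω' => Φ (W s ω')) ω ∂P := by
            refine integral_congr_ae (Filter.Eventually.of_forall fun ω => ?_)
            by_cases hω : ω ∈ A <;> simp [hξdef, hω]
        _ = ∫ ω in A, Φ (W s ω) ∂P := integral_indicator hAΩ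
    exact hRHS.symm.trans (heq.symm.trans hLHS)
  have hcond : (fun ω => Φ (W s ω)) =ᵐ[P]
      P[(fun ω => φ t (W t ω)) | natSigma W s] :=
    ae_eq_condExp_of_forall_setIntegral_eq hm hMt_int
      (fun A _ _ => hgint.integrableOn)
      (fun A hA _ => hseteq A hA)
      ((hΦm.comp hWsm).stronglyMeasurable.aestronglyMeasurable)
  have hmart_eq : P[(fun ω => φ t (W t ω)) | natSigma W s] =ᵐ[P]
      fun ω => φ s (W s ω) :=
    hmart.condExp_ae_eq (i := ⟨s, hs.le⟩) (j := ⟨t, ht⟩) (Subtype.mk_le_mk.mpr hst)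
  have hae : ∀ᵐ ω ∂P, Φ (W s ω) = φ s (W s ω) := hcond.trans hmart_eq
  have hset : MeasurableSet {x : ℝ | Φ x = φ s x} := measurableSet_eq_fun hΦm hφs
  have hmap : ∀ᵐ x ∂(P.map (W s)), Φ x = φ s x :=
    (ae_map_iff (hBM.meas s).aemeasurable hset).mpr hae
  rw [hBM.map_W hs.le] at hmap
  have hvne : s.toNNReal ≠ 0 := by
    simp only [ne_eq, Real.toNNReal_eq_zero, not_le]
    exact hs
  exact hmap.filter_mono (gaussianReal_absolutelyContinuous' 0 hvne).ae_le

/-- The expectation identity at time 0. -/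
lemma expect_one {P : Measure Ω} {W : ℝ → Ω → ℝ} (hBM : IsStandardBM P W) (φ : ℝ → ℝ → ℝ)
    (hφ : ∀ t : ℝ, 0 ≤ t → Measurable (φ t)) (hφ00 : φ 0 0 = 1)
    (hmart : Martingale (fun (t : ℝ≥0) ω => φ t (W t ω)) (natFiltration W hBM.meas) P)
    {t : ℝ} (ht : 0 ≤ t) :
    ∫ x, φ t x ∂(gaussianReal 0 t.toNNReal) = 1 := by
  haveI : IsProbabilityMeasure P := hBM.isProb
  have hm : (natFiltration W hBM.meas) 0 ≤ mΩ := (natFiltration W hBM.meas).le 0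
  have h := hmart.condExp_ae_eq (i := 0) (j := ⟨t, ht⟩) (zero_le)
  have h0 : (fun ω => φ ((0:ℝ≥0):ℝ) (W ((0:ℝ≥0):ℝ) ω)) = fun _ : Ω => (1:ℝ) := by
    funext ω
    rw [NNReal.coe_zero, hBM.init ω, hφ00]
  have hMt : ∫ ω, φ t (W t ω) ∂P = 1 := by
    calc ∫ ω, φ t (W t ω) ∂P
        = ∫ ω, (P[(fun ω => φ t (W t ω)) | (natFiltration W hBM.meas) 0]) ω ∂P :=
          (integral_condExp hm).symm
      _ = ∫ _ω, (1:ℝ) ∂P := integral_congr_ae (h.trans (h0 ▸ Filter.EventuallyEq.rfl))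
      _ = 1 := by simp
  calc ∫ x, φ t x ∂(gaussianReal 0 t.toNNReal)
      = ∫ x, φ t x ∂(P.map (W t)) := by rw [hBM.map_W ht]
    _ = ∫ ω, φ t (W t ω) ∂P :=
        integral_map (hBM.meas t).aemeasurable (hφ t ht).aestronglyMeasurable
    _ = 1 := hMt

/-- If `f` is continuous, strictly positive, `f (0,0) = 1`, and the three
processes `f (t, W t) e^{−λ₁ t}`, `f (t, W t)² e^{−λ₂ t}` and `f (4t, 2 W t + t) e^{−λ₂ t}`
are martingales with respect to the natural filtration of `W` for some constants `λ₁, λ₂`,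
then `f (u, v) = exp (c v − (c/2) u)` for some constant `c`. -/
theorem stmt14 (P : Measure Ω) (W : ℝ → Ω → ℝ) (hBM : IsStandardBM P W)
    (f : ℝ → ℝ → ℝ)
    (hcont : ContinuousOn (Function.uncurry f) (Set.Ici (0 : ℝ) ×ˢ Set.univ))
    (hpos : ∀ u v : ℝ, 0 ≤ u → 0 < f u v)
    (hone : f 0 0 = 1)
    (l₁ l₂ : ℝ)
    (hm₁ : Martingale (fun (t : ℝ≥0) ω => f t (W t ω) * Real.exp (-(l₁ * t)))
      (natFiltration W hBM.meas) P)
    (hm₂ : Martingale (fun (t : ℝ≥0) ω => f t (W t ω) ^ 2 * Real.exp (-(l₂ * t)))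
      (natFiltration W hBM.meas) P)
    (hm₃ : Martingale (fun (t : ℝ≥0) ω => f (4 * t) (2 * W t ω + t) * Real.exp (-(l₂ * t)))
      (natFiltration W hBM.meas) P) :
    ∃ c : ℝ, ∀ u v : ℝ, 0 ≤ u → f u v = Real.exp (c * v - c / 2 * u) := by
  haveI : IsProbabilityMeasure P := hBM.isProb
  obtain ⟨c, hc⟩ : ∃ c : ℝ, c = l₂ - 4 * l₁ := ⟨_, rfl⟩
  -- slice continuity
  have hslice : ∀ t : ℝ, 0 ≤ t → Continuous (fun x => f t x) := by
    intro t ht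
    rw [← continuousOn_univ]
    exact hcont.comp ((continuous_const.prodMk continuous_id).continuousOn)
      (fun x _ => ⟨ht, trivial⟩)
  have htime : ∀ w : ℝ, ContinuousWithinAt (fun a => f a w) (Set.Ici (0:ℝ)) 0 := by
    intro w
    have h : ContinuousOn (fun a => f a w) (Set.Ici (0:ℝ)) :=
      hcont.comp ((continuous_id.prodMk continuous_const).continuousOn)
        (fun a ha => ⟨ha, trivial⟩)
    exact h 0 Set.self_mem_Ici
  -- measurability of the three φ's
  have hmeas1 : ∀ t : ℝ, 0 ≤ t → Measurable (fun x => f t x * Real.exp (-(l₁ * t))) :=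
    fun t ht => ((hslice t ht).measurable).mul_const _
  have hmeas2 : ∀ t : ℝ, 0 ≤ t → Measurable (fun x => f t x ^ 2 * Real.exp (-(l₂ * t))) :=
    fun t ht => (((hslice t ht).measurable).pow_const 2).mul_const _
  have hmeas3 : ∀ t : ℝ, 0 ≤ t →
      Measurable (fun x => f (4 * t) (2 * x + t) * Real.exp (-(l₂ * t))) := by
    intro t ht
    have h2 : Continuous (fun x : ℝ => 2 * x + t) := by continuity
    exact (((hslice (4 * t) (by linarith)).comp h2).measurable).mul_const _
  -- Step 1: shift identity for a > 0
  have hshift : ∀ a : ℝ, 0 < a → ∀ u : ℝ, 0 ≤ u → ∀ w : ℝ,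
      f a (w + u) = Real.exp (c * u) * f a w := by
    intro a ha u hu w
    have h44 : (4:ℝ)*(a/4) = a := by ring
    have k3 : ∀ᵐ x ∂(volume : Measure ℝ),
        ∫ y, f (4*(a/4+u)) (2*(x+y) + (a/4+u)) * Real.exp (-(l₂*(a/4+u)))
          ∂(gaussianReal 0 ((a/4+u) - a/4).toNNReal)
        = f (4*(a/4)) (2*x + a/4) * Real.exp (-(l₂*(a/4))) :=
      keyP hBM (fun t x => f (4*t) (2*x + t) * Real.exp (-(l₂*t))) hmeas3 hm₃
        (by linarith) (by linarith)
    have k1 : ∀ᵐ X ∂(volume : Measure ℝ),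
        ∫ y, f (4*(a/4+u)) (X + y) * Real.exp (-(l₁*(4*(a/4+u))))
          ∂(gaussianReal 0 (4*(a/4+u) - 4*(a/4)).toNNReal)
        = f (4*(a/4)) X * Real.exp (-(l₁*(4*(a/4)))) :=
      keyP hBM (fun t x => f t x * Real.exp (-(l₁*t))) hmeas1 hm₁
        (by linarith) (by linarith)
    have hqmp : Measure.QuasiMeasurePreserving (fun x : ℝ => 2*x + (a/4+u))
        (volume : Measure ℝ) volume := by
      refine ⟨by fun_prop, ?_⟩
      have hcomp : (fun x : ℝ => 2*x + (a/4+u))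
          = (fun y : ℝ => y + (a/4+u)) ∘ (fun x : ℝ => 2*x) := rfl
      rw [hcomp, ← Measure.map_map (measurable_add_const _) (measurable_const_mul 2)]
      rw [show (fun x : ℝ => 2*x) = (fun x : ℝ => (2:ℝ)*x) from rfl]
      rw [Real.map_volume_mul_left (two_ne_zero), Measure.map_smul,
        map_add_right_eq_self volume _]
      exact Measure.smul_absolutelyContinuous
    have k1' := hqmp.ae k1
    have hmapγ : (gaussianReal 0 ((a/4+u) - a/4).toNNReal).map (fun y : ℝ => 2*y)
        = gaussianReal 0 (4*(a/4+u) - 4*(a/4)).toNNReal := by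
      have h := gaussianReal_map_const_mul (μ := 0) (v := ((a/4+u) - a/4).toNNReal) (2:ℝ)
      rw [mul_zero] at h
      convert h using 2
      apply NNReal.coe_injective
      simp only [NNReal.coe_mul, NNReal.coe_mk,
        Real.coe_toNNReal _ (by linarith : (0:ℝ) ≤ (a/4+u) - a/4),
        Real.coe_toNNReal _ (by linarith : (0:ℝ) ≤ 4*(a/4+u) - 4*(a/4))]
      ring
    have hcomb : ∀ᵐ x ∂(volume : Measure ℝ),
        f (4*(a/4)) (2*x + (a/4+u)) * Real.exp (l₁*(4*(a/4+u)) - l₁*(4*(a/4)))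
          = f (4*(a/4)) (2*x + a/4) * Real.exp (l₂*(a/4+u) - l₂*(a/4)) := by
      filter_upwards [k3, k1'] with x h3 h1
      rw [integral_mul_const] at h3 h1
      have hsm : AEStronglyMeasurable (fun z : ℝ => f (4*(a/4+u)) ((2*x + (a/4+u)) + z))
          ((gaussianReal 0 ((a/4+u) - a/4).toNNReal).map (fun y : ℝ => 2*y)) :=
        ((hslice (4*(a/4+u)) (by linarith)).comp (by fun_prop)).aestronglyMeasurable
      have hcov : ∫ y, f (4*(a/4+u)) (2*(x+y) + (a/4+u))
            ∂(gaussianReal 0 ((a/4+u) - a/4).toNNReal)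
          = ∫ y, f (4*(a/4+u)) ((2*x + (a/4+u)) + y)
            ∂(gaussianReal 0 (4*(a/4+u) - 4*(a/4)).toNNReal) := by
        rw [← hmapγ,
          integral_map (f := fun z : ℝ => f (4*(a/4+u)) ((2*x + (a/4+u)) + z))
            (measurable_const_mul 2).aemeasurable hsm]
        refine integral_congr_ae (Filter.Eventually.of_forall fun y => ?_)
        show f (4*(a/4+u)) (2*(x+y) + (a/4+u)) = f (4*(a/4+u)) ((2*x + (a/4+u)) + 2*y)
        rw [show (2*x + (a/4+u)) + 2*y = 2*(x+y) + (a/4+u) from by ring]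
      rw [hcov] at h3
      set I := ∫ y, f (4*(a/4+u)) ((2*x + (a/4+u)) + y)
        ∂(gaussianReal 0 (4*(a/4+u) - 4*(a/4)).toNNReal) with hI
      rw [Real.exp_sub, Real.exp_sub]
      rw [Real.exp_neg, Real.exp_neg] at h3 h1
      field_simp at h3 h1 ⊢
      linear_combination Real.exp (a * l₁) * h3 - Real.exp (l₂ * a / 4) * h1
    have heq := Measure.eq_of_ae_eq hcomb
      (((hslice (4*(a/4)) (by linarith)).comp
        (by fun_prop : Continuous fun x : ℝ => 2*x + (a/4+u))).mul continuous_const)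
      (((hslice (4*(a/4)) (by linarith)).comp
        (by fun_prop : Continuous fun x : ℝ => 2*x + a/4)).mul continuous_const)
    have hx := congrFun heq ((w - a/4)/2)
    rw [show 2*((w - a/4)/2) + (a/4+u) = w + u from by ring,
      show 2*((w - a/4)/2) + a/4 = w from by ring,
      show l₁*(4*(a/4+u)) - l₁*(4*(a/4)) = 4*(l₁*u) from by ring,
      show l₂*(a/4+u) - l₂*(a/4) = l₂*u from by ring, h44] at hx
    have hgoal : Real.exp (c*u) * Real.exp (4*(l₁*u)) = Real.exp (l₂*u) := by
      rw [← Real.exp_add]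
      congr 1
      rw [hc]; ring
    have h5 : (Real.exp (c*u) * f a w) * Real.exp (4*(l₁*u)) = f a w * Real.exp (l₂*u) := by
      calc (Real.exp (c*u) * f a w) * Real.exp (4*(l₁*u))
          = (Real.exp (c*u) * Real.exp (4*(l₁*u))) * f a w := by ring
        _ = Real.exp (l₂*u) * f a w := by rw [hgoal]
        _ = f a w * Real.exp (l₂*u) := mul_comm _ _
    exact mul_right_cancel₀ (Real.exp_ne_zero _) (hx.trans h5.symm)
  -- Step 2: extend to a = 0
  have hshift0 : ∀ u : ℝ, 0 ≤ u → ∀ w : ℝ,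
      f 0 (w + u) = Real.exp (c * u) * f 0 w := by
    intro u hu w
    have hIoi : nhdsWithin (0:ℝ) (Set.Ioi 0) ≤ nhdsWithin (0:ℝ) (Set.Ici 0) :=
      nhdsWithin_mono 0 Set.Ioi_subset_Ici_self
    have h1 := ((htime (w+u)).tendsto).mono_left hIoi
    have h2 := (((htime w).tendsto).mono_left hIoi).const_mul (Real.exp (c*u))
    have heqv : (fun a => f a (w+u)) =ᶠ[nhdsWithin (0:ℝ) (Set.Ioi 0)]
        fun a => Real.exp (c*u) * f a w := by
      filter_upwards [self_mem_nhdsWithin] with a ha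
      exact hshift a ha u hu w
    exact tendsto_nhds_unique (h1.congr' heqv) h2
  have hshiftAll : ∀ a : ℝ, 0 ≤ a → ∀ u : ℝ, 0 ≤ u → ∀ w : ℝ,
      f a (w + u) = Real.exp (c * u) * f a w := by
    intro a ha
    rcases eq_or_lt_of_le ha with h | h
    · exact h ▸ hshift0
    · exact hshift a h
  -- Step 3: exponential form in space
  have hform : ∀ a : ℝ, 0 ≤ a → ∀ w : ℝ, f a w = f a 0 * Real.exp (c * w) := by
    intro a ha w
    rcases le_or_gt 0 w with hw | hw
    · have h := hshiftAll a ha w hw 0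
      rw [zero_add] at h
      rw [h, mul_comm]
    · have h := hshiftAll a ha (-w) (by linarith) w
      rw [add_neg_cancel] at h
      rw [h, mul_right_comm, ← Real.exp_add, show c * -w + c * w = 0 from by ring,
        Real.exp_zero, one_mul]
  -- Step 4: expectation identities
  have hA : ∀ t : ℝ, 0 ≤ t → f t 0 * Real.exp (c ^ 2 * t / 2) * Real.exp (-(l₁ * t)) = 1 := by
    intro t ht
    have h := expect_one hBM (fun t x => f t x * Real.exp (-(l₁ * t))) hmeas1
      (by simp [hone]) hm₁ ht
    rw [integral_mul_const] at h
    have hint : ∫ x, f t x ∂(gaussianReal 0 t.toNNReal) = f t 0 * Real.exp (c ^ 2 * t / 2) := by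
      calc ∫ x, f t x ∂(gaussianReal 0 t.toNNReal)
          = ∫ x, f t 0 * Real.exp (c * x) ∂(gaussianReal 0 t.toNNReal) := by
            refine integral_congr_ae (Filter.Eventually.of_forall fun x => ?_)
            exact hform t ht x
        _ = f t 0 * Real.exp (c ^ 2 * t.toNNReal / 2) := by
            rw [integral_const_mul, integral_exp_gaussianReal]
        _ = f t 0 * Real.exp (c ^ 2 * t / 2) := by
            rw [Real.coe_toNNReal t ht]
    rw [hint] at h
    exact h
  have hB : (f 1 0) ^ 2 * Real.exp ((2 * c) ^ 2 / 2) * Real.exp (-(l₂ * 1)) = 1 := by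
    have h := expect_one hBM (fun t x => f t x ^ 2 * Real.exp (-(l₂ * t))) hmeas2
      (by simp [hone]) hm₂ (zero_le_one)
    rw [integral_mul_const] at h
    have hint : ∫ x, f 1 x ^ 2 ∂(gaussianReal 0 (1:ℝ).toNNReal)
        = (f 1 0) ^ 2 * Real.exp ((2 * c) ^ 2 / 2) := by
      calc ∫ x, f 1 x ^ 2 ∂(gaussianReal 0 (1:ℝ).toNNReal)
          = ∫ x, (f 1 0) ^ 2 * Real.exp ((2 * c) * x) ∂(gaussianReal 0 (1:ℝ).toNNReal) := by
            refine integral_congr_ae (Filter.Eventually.of_forall fun x => ?_)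
            show f 1 x ^ 2 = (f 1 0) ^ 2 * Real.exp ((2 * c) * x)
            rw [hform 1 zero_le_one x, mul_pow, pow_two (Real.exp (c * x)), ← Real.exp_add,
              show c * x + c * x = 2 * c * x from by ring]
        _ = (f 1 0) ^ 2 * Real.exp ((2 * c) ^ 2 * ((1:ℝ).toNNReal : ℝ) / 2) := by
            rw [integral_const_mul, integral_exp_gaussianReal]
        _ = (f 1 0) ^ 2 * Real.exp ((2 * c) ^ 2 / 2) := by norm_num
    rw [hint] at h
    exact h
  -- Step 5: algebra
  have hft0 : ∀ t : ℝ, 0 ≤ t → f t 0 = Real.exp (l₁ * t - c ^ 2 * t / 2) := by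
    intro t ht
    have h := hA t ht
    have h2 : f t 0 * Real.exp (c ^ 2 * t / 2 + -(l₁ * t)) = 1 := by
      rw [Real.exp_add, ← mul_assoc]
      exact h
    have h3 : f t 0 = (Real.exp (c ^ 2 * t / 2 + -(l₁ * t)))⁻¹ :=
      eq_inv_of_mul_eq_one_left h2
    rw [h3, ← Real.exp_neg]
    congr 1
    ring
  have hrel : 2 * l₁ = c ^ 2 - c := by
    have h := hB
    rw [hft0 1 zero_le_one, pow_two, ← Real.exp_add, ← Real.exp_add, ← Real.exp_add,
      Real.exp_eq_one_iff] at h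
    have hc2 : c ^ 2 = l₂ - 2 * l₁ := by
      ring_nf at h
      linarith
    rw [hc2, hc]
    ring
  refine ⟨c, fun u v hu => ?_⟩
  rw [hform u hu v, hft0 u hu, ← Real.exp_add]
  congr 1
  have hl : l₁ = (c ^ 2 - c) / 2 := by linarith
  rw [hl]
  ring

end
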